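/- arXiv:1004.1420 — 4 statements merged into one kernel-verified Lean document; each statement's English description precedes it below -/
import Mathlib

section
/- The m-th power Ω^m of the element Ω = Σ_{s=1}^{m} c_{[1,2s−1]} ∧ c_{2s} is a nonzero element of the top exterior power ⋀^{2m}U. -/
/-!
Setup: `U = ℚ^{2m}` with basis `c_1, …, c_{2m}` (1-based indexing), and
`Ω = Σ_{s=1}^{m} c_{[1,2s−1]} ∧ c_{2s}` in the exterior algebra `⋀ U`, where
`c_{[1,2s−1]} = c_1 + c_3 + ⋯ + c_{2s−1}`.
-/

noncomputable section

/-- 1-based standard basis vector `c_i` of `ℚ^n`. -/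
def bas (n i : ℕ) : Fin n → ℚ := fun j => if (j : ℕ) + 1 = i then 1 else 0

/-- The class `Ω = Σ_{s=1}^{m} c_{[1,2s−1]} ∧ c_{2s}`.  (Below `s ∈ {0, …, m-1}`
stands for the paper's `s + 1`, so `c_{[1,2s-1]}` becomes `∑_{j<s+1} c_{2j+1}` and
`c_{2s}` becomes `c_{2s+2}`.) -/
def Omega (m : ℕ) : ExteriorAlgebra ℚ (Fin (2 * m) → ℚ) :=
  ∑ s ∈ Finset.range m,
    ExteriorAlgebra.ι ℚ (∑ j ∈ Finset.range (s + 1), bas (2 * m) (2 * j + 1)) *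
      ExteriorAlgebra.ι ℚ (bas (2 * m) (2 * s + 2))

namespace OmegaAux

open ExteriorAlgebra

/-! ### Generic ring lemmas -/

lemma add_pow_sq_zero {A : Type*} [Ring A] {a b : A} (h : Commute a b) (ha : a * a = 0) :
    ∀ j : ℕ, (a + b) ^ j = b ^ j + j • (a * b ^ (j - 1))
  | 0 => by simp
  | 1 => by simp [add_comm]
  | (j + 2) => by
    have IH := add_pow_sq_zero h ha (j + 1)
    have hcomm : a * b ^ (j + 1) = b ^ (j + 1) * a := (h.pow_right (j + 1)).eq
    have h1 : a * b ^ j * a = 0 := by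
      rw [mul_assoc, ← (h.pow_right j).eq, ← mul_assoc, ha, zero_mul]
    have h2 : a * b ^ j * b = a * b ^ (j + 1) := by rw [mul_assoc, ← pow_succ]
    calc (a + b) ^ (j + 2) = (a + b) ^ (j + 1) * (a + b) := by rw [pow_succ]
      _ = (b ^ (j + 1) + (j + 1) • (a * b ^ j)) * (a + b) := by
          rw [IH]; norm_num
      _ = b ^ (j + 1) * a + b ^ (j + 1) * b
            + ((j + 1) • (a * b ^ j * a) + (j + 1) • (a * b ^ j * b)) := by
          rw [add_mul, smul_mul_assoc, mul_add, mul_add, smul_add]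
      _ = a * b ^ (j + 1) + b ^ (j + 2) + (j + 1) • (a * b ^ (j + 1)) := by
          rw [h1, h2, smul_zero, zero_add, ← hcomm, ← pow_succ]
      _ = b ^ (j + 2) + (j + 2) • (a * b ^ (j + 2 - 1)) := by
          have e1 : j + 2 - 1 = j + 1 := rfl
          have e2 : (j + 2) • (a * b ^ (j + 1))
              = (j + 1) • (a * b ^ (j + 1)) + a * b ^ (j + 1) := succ_nsmul _ _
          rw [e1, e2]
          abel

lemma sum_pow_sq_zero {A : Type*} [Ring A] (x : ℕ → A) (P : ℕ → A)
    (hc : ∀ i j, Commute (x i) (x j)) (hsq : ∀ i, x i * x i = 0)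
    (hP0 : P 0 = 1) (hPs : ∀ k, P (k + 1) = P k * x k) :
    ∀ k, (∀ j, k < j → (∑ s ∈ Finset.range k, x s) ^ j = 0) ∧
      (∑ s ∈ Finset.range k, x s) ^ k = k.factorial • P k := by
  have hPc : ∀ i k, Commute (x i) (P k) := by
    intro i k; induction k with
    | zero => rw [hP0]; exact Commute.one_right _
    | succ k ih => rw [hPs]; exact ih.mul_right (hc i k)
  intro k
  induction k with
  | zero =>
    constructor
    · intro j hj
      rw [Finset.sum_range_zero, zero_pow hj.ne']
    · simp [hP0]
  | succ k ih =>
    have hS : Commute (x k) (∑ s ∈ Finset.range k, x s) :=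
      Commute.sum_right _ _ _ (fun i _ => hc k i)
    have key : ∀ j, (∑ s ∈ Finset.range (k + 1), x s) ^ j
        = (∑ s ∈ Finset.range k, x s) ^ j
          + j • (x k * (∑ s ∈ Finset.range k, x s) ^ (j - 1)) := by
      intro j
      rw [Finset.sum_range_succ, add_comm (∑ s ∈ Finset.range k, x s) (x k)]
      exact add_pow_sq_zero hS (hsq k) j
    constructor
    · intro j hj
      rw [key j, ih.1 j (by omega), ih.1 (j - 1) (by omega), mul_zero, smul_zero, add_zero]
    · rw [key (k + 1), ih.1 (k + 1) (Nat.lt_succ_self k), zero_add, Nat.add_sub_cancel, ih.2,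
        mul_smul_comm, smul_smul, (hPc k k).eq, ← hPs, Nat.factorial_succ]

/-! ### Exterior algebra lemmas -/

variable {m : ℕ}

/-- 0-based standard basis vector. -/
def ee (m i : ℕ) : Fin (2 * m) → ℚ := bas (2 * m) (i + 1)

/-- Ordered product `ι (e 0) * ι (e 1) * ⋯ * ι (e (k-1))`. -/
def W (m : ℕ) : ℕ → ExteriorAlgebra ℚ (Fin (2 * m) → ℚ)
  | 0 => 1
  | (k + 1) => W m k * ExteriorAlgebra.ι ℚ (ee m k)

lemma hswap (u v : Fin (2 * m) → ℚ) :
    ι ℚ u * ι ℚ v = -(ι ℚ v * ι ℚ u) :=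
  eq_neg_of_add_eq_zero_left (ι_add_mul_swap u v)

lemma swap3 (u v w : Fin (2 * m) → ℚ) :
    ι ℚ u * ι ℚ v * ι ℚ w = ι ℚ w * (ι ℚ u * ι ℚ v) := by
  rw [mul_assoc, hswap v w, mul_neg, ← mul_assoc, hswap u w, neg_mul, neg_neg, mul_assoc]

lemma comm2 (a b c d : Fin (2 * m) → ℚ) :
    Commute (ι ℚ a * ι ℚ b) (ι ℚ c * ι ℚ d) := by
  show ι ℚ a * ι ℚ b * (ι ℚ c * ι ℚ d) = ι ℚ c * ι ℚ d * (ι ℚ a * ι ℚ b)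
  calc ι ℚ a * ι ℚ b * (ι ℚ c * ι ℚ d)
      = ι ℚ a * ι ℚ b * ι ℚ c * ι ℚ d := (mul_assoc (ι ℚ a * ι ℚ b) _ _).symm
    _ = ι ℚ c * (ι ℚ a * ι ℚ b) * ι ℚ d := by rw [swap3]
    _ = ι ℚ c * ((ι ℚ a * ι ℚ b) * ι ℚ d) := mul_assoc _ _ _
    _ = ι ℚ c * (ι ℚ d * (ι ℚ a * ι ℚ b)) := by rw [swap3]
    _ = ι ℚ c * ι ℚ d * (ι ℚ a * ι ℚ b) := (mul_assoc _ _ _).symm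

lemma sq2 (a b : Fin (2 * m) → ℚ) :
    (ι ℚ a * ι ℚ b) * (ι ℚ a * ι ℚ b) = 0 := by
  rw [← mul_assoc, swap3 a b a, ← mul_assoc, ι_sq_zero, zero_mul, zero_mul]

lemma W_mul_ee_zero (m : ℕ) : ∀ k j, j < k → W m k * ι ℚ (ee m j) = 0 := by
  intro k
  induction k with
  | zero => intro j hj; omega
  | succ k ih =>
    intro j hj
    show W m k * ι ℚ (ee m k) * ι ℚ (ee m j) = 0
    rcases Nat.lt_succ_iff_lt_or_eq.mp hj with h | rfl
    · rw [mul_assoc, hswap, mul_neg, ← mul_assoc, ih j h, zero_mul, neg_zero]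
    · rw [mul_assoc, ι_sq_zero, mul_zero]

/-- The `s`-th summand of `Ω`. -/
def xo (m s : ℕ) : ExteriorAlgebra ℚ (Fin (2 * m) → ℚ) :=
  ExteriorAlgebra.ι ℚ (∑ j ∈ Finset.range (s + 1), bas (2 * m) (2 * j + 1)) *
    ExteriorAlgebra.ι ℚ (bas (2 * m) (2 * s + 2))

lemma Omega_eq (m : ℕ) : Omega m = ∑ s ∈ Finset.range m, xo m s := rfl

lemma W_step (m k : ℕ) : W m (2 * k) * xo m k = W m (2 * k + 2) := by
  show W m (2 * k) *
      (ι ℚ (∑ j ∈ Finset.range (k + 1), ee m (2 * j)) * ι ℚ (ee m (2 * k + 1)))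
    = W m (2 * k + 2)
  rw [map_sum, Finset.sum_mul, Finset.mul_sum, Finset.sum_range_succ]
  have hz : ∀ j ∈ Finset.range k,
      W m (2 * k) * (ι ℚ (ee m (2 * j)) * ι ℚ (ee m (2 * k + 1))) = 0 := by
    intro j hj
    rw [← mul_assoc, W_mul_ee_zero m (2 * k) (2 * j)
      (by have := Finset.mem_range.mp hj; omega), zero_mul]
  rw [Finset.sum_eq_zero hz, zero_add, ← mul_assoc]
  rfl

lemma W_ofFn (m : ℕ) : ∀ k, W m k
    = (List.ofFn (fun i : Fin k => ExteriorAlgebra.ι ℚ (ee m i))).prod := by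
  intro k
  induction k with
  | zero => simp [W]
  | succ k ih =>
    rw [List.ofFn_succ', List.prod_concat]
    simp only [Fin.coe_castSucc, Fin.val_last]
    rw [← ih]
    rfl

/-- The determinant functional in top degree, zero in other degrees. -/
def detF (m : ℕ) : ∀ i : ℕ, (Fin (2 * m) → ℚ) [⋀^Fin i]→ₗ[ℚ] ℚ := fun i =>
  if h : i = 2 * m then
    ((Pi.basisFun ℚ (Fin (2 * m))).det).domDomCongr (finCongr h.symm) else 0

lemma detF_at (m : ℕ) (v : Fin (2 * m) → (Fin (2 * m) → ℚ)) :
    detF m (2 * m) v = (Pi.basisFun ℚ (Fin (2 * m))).det v := by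
  have h : detF m (2 * m)
      = ((Pi.basisFun ℚ (Fin (2 * m))).det).domDomCongr
          (finCongr (rfl : 2 * m = 2 * m).symm) :=
    dif_pos rfl
  rw [h, AlternatingMap.domDomCongr_apply]
  congr 1

end OmegaAux

open OmegaAux ExteriorAlgebra in
/-- `Ω^m` is a nonzero element of the top exterior power `⋀^{2m} U`. -/
theorem Omega_pow_ne_zero (m : ℕ) (hm : 1 ≤ m) :
    Omega m ^ m ≠ 0 ∧ Omega m ^ m ∈ ⋀[ℚ]^(2 * m) (Fin (2 * m) → ℚ) := by
  classical
  -- the key identity `Ω^m = m! • (ι e₀ * ⋯ * ι e_{2m-1})`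
  have hkey : Omega m ^ m = m.factorial • W m (2 * m) := by
    have h := (sum_pow_sq_zero (xo m) (fun k => W m (2 * k))
      (fun i j => comm2 _ _ _ _) (fun i => sq2 _ _)
      rfl
      (fun k => by
        show W m (2 * (k + 1)) = W m (2 * k) * xo m k
        rw [show 2 * (k + 1) = 2 * k + 2 by ring]
        exact (W_step m k).symm) m).2
    rw [Omega_eq, h]
  have hW : W m (2 * m) = ExteriorAlgebra.ιMulti ℚ (2 * m) (fun i : Fin (2 * m) => ee m i) := by
    rw [ιMulti_apply, W_ofFn]
  constructor
  · -- nonvanishing, via the determinant functional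
    have hv : (fun i : Fin (2 * m) => ee m (i : ℕ)) = ⇑(Pi.basisFun ℚ (Fin (2 * m))) := by
      funext i j
      simp only [ee, bas, Pi.basisFun_apply, Pi.single_apply]
      by_cases h : j = i
      · subst h; simp
      · rw [if_neg h, if_neg (by intro hji; exact h (Fin.ext (by omega)))]
    have hval : ExteriorAlgebra.liftAlternating (detF m) (Omega m ^ m)
        = (m.factorial : ℚ) := by
      rw [hkey, map_nsmul, hW, ExteriorAlgebra.liftAlternating_apply_ιMulti, detF_at, hv,
        Module.Basis.det_self, nsmul_eq_mul, mul_one]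
    intro h0
    rw [h0, map_zero] at hval
    exact (Nat.cast_ne_zero (R := ℚ)).mpr m.factorial_ne_zero hval.symm
  · -- membership in the top exterior power
    have hmem1 : Omega m ∈ (⋀[ℚ]^2 (Fin (2 * m) → ℚ)) := by
      rw [Omega_eq]
      refine Submodule.sum_mem _ (fun s _ => ?_)
      rw [show (⋀[ℚ]^2 (Fin (2 * m) → ℚ))
          = LinearMap.range (ExteriorAlgebra.ι ℚ (M := Fin (2 * m) → ℚ))
            * LinearMap.range (ExteriorAlgebra.ι ℚ (M := Fin (2 * m) → ℚ)) from pow_two _]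
      exact Submodule.mul_mem_mul (LinearMap.mem_range_self _ _) (LinearMap.mem_range_self _ _)
    have h2 : Omega m ^ m ∈ (⋀[ℚ]^2 (Fin (2 * m) → ℚ)) ^ m :=
      Submodule.pow_mem_pow _ hmem1 m
    have hpm : (⋀[ℚ]^(2 * m) (Fin (2 * m) → ℚ))
        = (⋀[ℚ]^2 (Fin (2 * m) → ℚ)) ^ m := pow_mul _ 2 m
    rw [hpm]
    exact h2

end
end

section
/- (Non-mixing lemma, Lemma 1.4.7, in its linear-algebra form.) Let 0 ≤ p ≤ f and let u ∈ Σ_{i+2j ≤ p} Q^{i,j}. If η^{f−p+1}(u) = 0, then u ∈ Q^{p,0}. -/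
/-!
The non-mixing lemma (Lemma 1.4.7) in its linear-algebra form:  `H` is a
finite-dimensional ℚ-vector space with an internal direct sum decomposition
`H = ⊕_{0 ≤ i ≤ f, 0 ≤ j ≤ f−i} Q^{i,j}`, and `η : H → H` is a linear map such that
(a) `η^j` restricts to an isomorphism of `Q^{i,0}` onto `Q^{i,j}`, and
(b) `η(Q^{i,f−i}) ⊆ Σ_{k ≤ f} Σ_{l ≤ min(f−i,f−k)} Q^{k,l}`.
If `u ∈ Σ_{i+2j ≤ p} Q^{i,j}` and `η^{f−p+1}(u) = 0`, then `u ∈ Q^{p,0}`.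
-/

theorem non_mixing (H : Type*) [AddCommGroup H] [Module ℚ H]
    [FiniteDimensional ℚ H] (f : ℕ) (Q : ℕ → ℕ → Submodule ℚ H)
    (hdec : DirectSum.IsInternal
      (fun q : {q : ℕ × ℕ // q.1 ≤ f ∧ q.2 ≤ f - q.1} => Q q.1.1 q.1.2))
    (η : H →ₗ[ℚ] H)
    (ha : ∀ i ≤ f, ∀ j ≤ f - i,
      Submodule.map (η ^ j) (Q i 0) = Q i j ∧ ∀ x ∈ Q i 0, (η ^ j) x = 0 → x = 0)
    (hb : ∀ i ≤ f, ∀ x ∈ Q i (f - i),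
      η x ∈ ⨆ (k : ℕ) (_ : k ≤ f) (l : ℕ) (_ : l ≤ min (f - i) (f - k)), Q k l)
    (p : ℕ) (hp : p ≤ f) (u : H)
    (hu : u ∈ ⨆ (i : ℕ) (j : ℕ) (_ : i ≤ f ∧ j ≤ f - i ∧ i + 2 * j ≤ p), Q i j)
    (hη : (η ^ (f - p + 1)) u = 0) :
    u ∈ Q p 0 := by
  classical
  set N := f - p + 1 with hNdef
  set ι := {q : ℕ × ℕ // q.1 ≤ f ∧ q.2 ≤ f - q.1} with hι
  set D : ι → Submodule ℚ H := fun q => Q q.1.1 q.1.2 with hD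
  -- the linear equivalence from the internal direct sum
  let e : (DirectSum ι fun q => ↥(D q)) ≃ₗ[ℚ] H := LinearEquiv.ofBijective (DirectSum.coeLinearMap D) hdec
  have he_of : ∀ (q : ι) (x : D q), e (DirectSum.of (fun q => D q) q x) = x := by
    intro q x
    exact DirectSum.coeLinearMap_of D q x
  -- projections
  set proj : ∀ q : ι, H →ₗ[ℚ] D q := fun q =>
    (DirectSum.component ℚ ι (fun q => D q) q) ∘ₗ (e.symm : H →ₗ[ℚ] DirectSum ι fun q => ↥(D q)) with hprojdef
  have hproj_apply : ∀ (q : ι) (x : H), proj q x = e.symm x q := fun q x => rfl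
  have hproj_self : ∀ (q : ι), ∀ x ∈ D q, ((proj q x : H)) = x := by
    intro q x hx
    have h : e.symm x = DirectSum.of (fun q => D q) q ⟨x, hx⟩ := by
      rw [LinearEquiv.symm_apply_eq, he_of]
    rw [hproj_apply, h, DirectSum.of_eq_same]
  have hproj_ne : ∀ (q q' : ι), q' ≠ q → ∀ x ∈ D q', proj q x = 0 := by
    intro q q' hne x hx
    have h : e.symm x = DirectSum.of (fun q => D q) q' ⟨x, hx⟩ := by
      rw [LinearEquiv.symm_apply_eq, he_of]
    rw [hproj_apply, h, DirectSum.of_eq_of_ne _ _ _ hne.symm]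
  -- the key lemma about powers of η on Q i j
  have hkey : ∀ (i j : ℕ), i ≤ f → j + N ≤ f - i → ∀ x ∈ Q i j,
      (η ^ N) x ∈ Q i (j + N) ∧ ((η ^ N) x = 0 → x = 0) := by
    intro i j hif hjN x hx
    have hj : j ≤ f - i := le_trans (Nat.le_add_right _ _) hjN
    have hx' : x ∈ Submodule.map (η ^ j) (Q i 0) := by
      rw [(ha i hif j hj).1]; exact hx
    obtain ⟨v, hv, hvx⟩ := hx'
    have hcomp : (η ^ N) x = (η ^ (j + N)) v := by
      rw [← hvx, ← Module.End.mul_apply, ← pow_add, Nat.add_comm]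
    constructor
    · rw [hcomp, ← (ha i hif (j + N) hjN).1]
      exact Submodule.mem_map_of_mem hv
    · intro h0
      have hv0 : v = 0 := (ha i hif (j + N) hjN).2 v hv (by rw [← hcomp]; exact h0)
      rw [← hvx, hv0, map_zero]
  -- split u
  set M : Submodule ℚ H := ⨆ (q : ι) (_ : q.1.1 + 2 * q.1.2 ≤ p ∧ q.1 ≠ (p, 0)), D q with hM
  have hsplit : u ∈ M ⊔ Q p 0 := by
    have hle : (⨆ (i : ℕ) (j : ℕ) (_ : i ≤ f ∧ j ≤ f - i ∧ i + 2 * j ≤ p), Q i j)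
        ≤ M ⊔ Q p 0 := by
      refine iSup_le fun i => iSup_le fun j => iSup_le fun h => ?_
      by_cases hij : (i, j) = (p, 0)
      · have h1 : i = p := congrArg Prod.fst hij
        have h2 : j = 0 := congrArg Prod.snd hij
        subst h1; subst h2
        exact le_sup_right
      · refine le_trans ?_ le_sup_left
        have : Q i j = D ⟨(i, j), h.1, h.2.1⟩ := rfl
        rw [this]
        exact le_iSup_of_le ⟨(i, j), h.1, h.2.1⟩ (le_iSup_of_le ⟨h.2.2, hij⟩ le_rfl)
    exact hle hu
  obtain ⟨m, hm, c, hc, hum⟩ := Submodule.mem_sup.mp hsplit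
  -- the "overflow" space
  set S : Submodule ℚ H :=
    ⨆ (k : ℕ) (_ : k ≤ f) (l : ℕ) (_ : l ≤ min (f - p) (f - k)), Q k l with hS
  have hcS : (η ^ N) c ∈ S := by
    have h1 : (η ^ (f - p)) c ∈ Q p (f - p) := by
      rw [← (ha p hp (f - p) le_rfl).1]
      exact Submodule.mem_map_of_mem hc
    have h2 := hb p hp _ h1
    have h3 : (η ^ N) c = η ((η ^ (f - p)) c) := by
      rw [hNdef, pow_succ', Module.End.mul_apply]
    rw [h3]; exact h2
  have hmS : (η ^ N) m ∈ S := by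
    have h1 : (η ^ N) m = - (η ^ N) c := by
      have h2 : (η ^ N) (m + c) = 0 := by rw [hum]; exact hη
      rw [map_add] at h2
      exact eq_neg_of_add_eq_zero_left h2
    rw [h1]
    exact S.neg_mem hcS
  -- decompose m into components
  set w := e.symm m with hwdef
  have hmw : m = e w := (e.apply_symm_apply m).symm
  have hwproj : ∀ q : ι, (w q) = proj q m := fun q => rfl
  have hsupp : ∀ q ∈ DFinsupp.support w, q.1.1 + 2 * q.1.2 ≤ p ∧ q.1 ≠ (p, 0) := by
    intro q hqs
    by_contra hnc
    have hker : M ≤ LinearMap.ker (proj q) := by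
      refine iSup_le fun q' => iSup_le fun hq' => ?_
      intro x hx
      have hne : q' ≠ q := fun h => hnc (h ▸ hq')
      exact LinearMap.mem_ker.mpr (hproj_ne q q' hne x hx)
    have h0 : proj q m = 0 := hker hm
    exact DFinsupp.mem_support_iff.mp hqs (by rw [hwproj q, h0])
  have harith : ∀ q : ι, q.1.1 + 2 * q.1.2 ≤ p → q.1 ≠ (p, 0) → q.1.2 + N ≤ f - q.1.1 := by
    intro q h1 h2
    have hif := q.2.1
    have hlt : q.1.1 + q.1.2 < p := by
      rcases Nat.eq_zero_or_pos q.1.2 with h0 | h0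
      · have hne : q.1.1 ≠ p := by
          intro h
          exact h2 (Prod.ext h h0)
        omega
      · omega
    omega
  have hrep : (η ^ N) m = ∑ q ∈ DFinsupp.support w, (η ^ N) ((w q : H)) := by
    conv_lhs => rw [hmw, ← DirectSum.sum_support_of w]
    rw [map_sum, map_sum]
    refine Finset.sum_congr rfl fun q _ => ?_
    rw [he_of]
  have hwq : ∀ q ∈ DFinsupp.support w, False := by
    intro q' hq's
    obtain ⟨hcond1, hcond2⟩ := hsupp q' hq's
    have hshift := harith q' hcond1 hcond2
    have hq'key := hkey q'.1.1 q'.1.2 q'.2.1 hshift (w q') (w q').2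
    set q2 : ι := ⟨(q'.1.1, q'.1.2 + N), q'.2.1, hshift⟩ with hq2
    have hcalc : ((proj q2 ((η ^ N) m) : H)) = (η ^ N) ((w q' : H)) := by
      rw [hrep, map_sum, AddSubmonoidClass.coe_finset_sum]
      rw [Finset.sum_eq_single q']
      · exact hproj_self q2 _ hq'key.1
      · intro q hqs hne
        obtain ⟨hc1, hc2⟩ := hsupp q hqs
        have hshiftq := harith q hc1 hc2
        have hmemq := (hkey q.1.1 q.1.2 q.2.1 hshiftq (w q) (w q).2).1
        have hneq : (⟨(q.1.1, q.1.2 + N), q.2.1, hshiftq⟩ : ι) ≠ q2 := by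
          intro hEq
          apply hne
          have e0 : ((q.1.1, q.1.2 + N) : ℕ × ℕ) = (q'.1.1, q'.1.2 + N) :=
            Subtype.ext_iff.mp hEq
          injection e0 with e1 e2
          have e3 : q.1.2 = q'.1.2 := by omega
          exact Subtype.ext (Prod.ext e1 e3)
        rw [hproj_ne q2 _ hneq _ hmemq]
        simp
      · intro h; exact absurd hq's h
    have hS0 : proj q2 ((η ^ N) m) = 0 := by
      have hker : S ≤ LinearMap.ker (proj q2) := by
        refine iSup_le fun k => iSup_le fun hk => iSup_le fun l => iSup_le fun hl => ?_
        intro x hx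
        have hlfk : l ≤ f - k := le_trans hl (min_le_right _ _)
        have hlfp : l ≤ f - p := le_trans hl (min_le_left _ _)
        have hne : (⟨(k, l), hk, hlfk⟩ : ι) ≠ q2 := by
          intro hEq
          have e0 : ((k, l) : ℕ × ℕ) = (q'.1.1, q'.1.2 + N) := Subtype.ext_iff.mp hEq
          injection e0 with e1 e2
          omega
        exact LinearMap.mem_ker.mpr (hproj_ne q2 _ hne x hx)
      exact hker hmS
    have h0 : (η ^ N) ((w q' : H)) = 0 := by
      rw [← hcalc, hS0]
      simp
    exact DFinsupp.mem_support_iff.mp hq's (Subtype.ext (hq'key.2 h0))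
  have hw0 : w = 0 := by
    rw [← DFinsupp.support_eq_empty]
    exact Finset.eq_empty_iff_forall_notMem.mpr hwq
  have hm0 : m = 0 := by rw [hmw, hw0, map_zero]
  rw [← hum, hm0, zero_add]
  exact hc
end

section
/- If b ≥ 1 and s, t ≥ 0 are integers with 2s + 2t ≥ 2a − 2 + b, then the monomial β^s·γ^t belongs to the ideal I^a_b of ℚ[α, β, γ]. (This is the commutative-algebra content of Proposition 1.2.4(1) together with Remark 1.2.5: combined with the presentation of the cohomology ring it yields β^s ψ^{t̲} = 0 for 2s + t ≥ deg D.) -/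
/-!
Proposition 1.2.4(1) + Remark 1.2.5, commutative-algebra content: in
`ℚ[α, β, γ]` (here `α = X 0`, `β = X 1`, `γ = X 2`), if `b ≥ 1` and
`2s + 2t ≥ 2a − 2 + b` (as integers), then `β^s γ^t` lies in the ideal `I^a_b`
generated by `γ^{a+1}` and the relations `ρ^c_{r,s,t}` with
`c = r + 3s + 2t − 2a + 2 − b`, for `r + 3s + 3t > 3a − 3 + b` and
`r + 2s + 2t ≥ 2a − 2 + b` (as integers).
-/

noncomputable section

open MvPolynomial

/-- `ρ^c_{r,s,t} := Σ_{i=0}^{min(c,r,s)} (α^{r−i}/(r−i)!) (β^{s−i}/(s−i)!) ((2γ)^{t+i}/i!)`. -/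
def rho (r s t c : ℕ) : MvPolynomial (Fin 3) ℚ :=
  ∑ i ∈ Finset.range (min c (min r s) + 1),
    C ((Nat.factorial (r - i) : ℚ)⁻¹ * (Nat.factorial (s - i) : ℚ)⁻¹ *
        (2 ^ (t + i) / (Nat.factorial i : ℚ))) *
      X 0 ^ (r - i) * X 1 ^ (s - i) * X 2 ^ (t + i)

/-- The ideal `I^a_b` of `ℚ[α, β, γ]`. -/
def Iab (a b : ℕ) : Ideal (MvPolynomial (Fin 3) ℚ) :=
  Ideal.span ({X 2 ^ (a + 1)} ∪
    {p | ∃ r s t c : ℕ,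
      ((r : ℤ) + 3 * s + 3 * t > 3 * (a : ℤ) - 3 + b) ∧
      ((r : ℤ) + 2 * s + 2 * t ≥ 2 * (a : ℤ) - 2 + b) ∧
      ((c : ℤ) = (r : ℤ) + 3 * s + 2 * t - 2 * a + 2 - b) ∧
      p = rho r s t c})

theorem beta_gamma_mem_Iab (a b s t : ℕ) (hb : 1 ≤ b)
    (h : 2 * (s : ℤ) + 2 * t ≥ 2 * (a : ℤ) - 2 + b) :
    X 1 ^ s * X 2 ^ t ∈ Iab a b := by
  set c : ℕ := 3 * s + 2 * t + 2 - (2 * a + b) with hc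
  have hab : 2 * a + b ≤ 3 * s + 2 * t + 2 := by omega
  have hmem : rho 0 s t c ∈ Iab a b := by
    apply Ideal.subset_span
    right
    exact ⟨0, s, t, c, by push_cast; omega, by push_cast; omega, by push_cast; omega, rfl⟩
  have hrho : rho 0 s t c =
      C ((Nat.factorial s : ℚ)⁻¹ * 2 ^ t) * (X 1 ^ s * X 2 ^ t) := by
    simp [rho, Finset.sum_range_one, Nat.factorial]
    ring
  have hkey : X 1 ^ s * X 2 ^ t =
      C ((Nat.factorial s : ℚ) * (2 ^ t)⁻¹) * rho 0 s t c := by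
    rw [hrho, ← mul_assoc, ← C_mul]
    have h1 : (Nat.factorial s : ℚ) ≠ 0 := Nat.cast_ne_zero.mpr s.factorial_ne_zero
    have h2 : (2 : ℚ) ^ t ≠ 0 := pow_ne_zero _ two_ne_zero
    field_simp
    simp
  rw [hkey]
  exact Ideal.mul_mem_left _ _ hmem

end
end

section
/- Every 2×2 complex matrix C satisfying C·A_i = A_i·C and C·B_i = B_i·C for all i = 1, …, g is a scalar multiple of the identity matrix. (This is the Schur-type statement underlying the freeness of the PGL₂(ℂ)-action on the representation space defining the twisted character variety.) -/
/-!
Schur-type statement: if `A_1, B_1, …, A_g, B_g` are invertible `2×2` complex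
matrices with `A_1⁻¹B_1⁻¹A_1B_1 ⋯ A_g⁻¹B_g⁻¹A_gB_g = −I`, then every `2×2` complex
matrix `C` commuting with every `A_i` and every `B_i` is a scalar multiple of the
identity.
-/

lemma list_prod_mulVec_fix (v : Fin 2 → ℂ) :
    ∀ L : List (Matrix (Fin 2) (Fin 2) ℂ), (∀ M ∈ L, M.mulVec v = v) →
      L.prod.mulVec v = v := by
  intro L
  induction L with
  | nil => intro _; simp [Matrix.one_mulVec]
  | cons h t ih =>
      intro hmem
      have h1 : h.mulVec v = v := hmem h (List.mem_cons_self)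
      have h2 : t.prod.mulVec v = v := ih fun M hM => hmem M (List.mem_cons_of_mem _ hM)
      rw [List.prod_cons, ← Matrix.mulVec_mulVec, h2, h1]

theorem commutant_is_scalar (g : ℕ) (hg : 1 ≤ g)
    (A B : ℕ → Matrix (Fin 2) (Fin 2) ℂ)
    (hA : ∀ i, 1 ≤ i → i ≤ g → IsUnit (A i))
    (hB : ∀ i, 1 ≤ i → i ≤ g → IsUnit (B i))
    (hrel : ((List.range g).map
        (fun i => (A (i + 1))⁻¹ * (B (i + 1))⁻¹ * A (i + 1) * B (i + 1))).prod
      = -1)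
    (C : Matrix (Fin 2) (Fin 2) ℂ)
    (hCA : ∀ i, 1 ≤ i → i ≤ g → C * A i = A i * C)
    (hCB : ∀ i, 1 ≤ i → i ≤ g → C * B i = B i * C) :
    ∃ c : ℂ, C = c • (1 : Matrix (Fin 2) (Fin 2) ℂ) := by
  obtain ⟨c, hc⟩ := Module.End.exists_eigenvalue (Matrix.mulVecLin C)
  obtain ⟨v, hv⟩ := hc.exists_hasEigenvector
  have hv0 : v ≠ 0 := hv.right
  have hCv : C.mulVec v = c • v := by
    have := hv.apply_eq_smul
    simpa [Matrix.mulVecLin_apply] using this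
  by_cases hsc : C = c • (1 : Matrix (Fin 2) (Fin 2) ℂ)
  · exact ⟨c, hsc⟩
  exfalso
  set N : Matrix (Fin 2) (Fin 2) ℂ := C - c • 1 with hNdef
  have hNne : N ≠ 0 := sub_ne_zero.mpr hsc
  set f : (Fin 2 → ℂ) →ₗ[ℂ] (Fin 2 → ℂ) := Matrix.mulVecLin N with hfdef
  have hfne : f ≠ 0 := by
    intro h
    apply hNne
    ext i j
    have := congrArg (fun (φ : (Fin 2 → ℂ) →ₗ[ℂ] (Fin 2 → ℂ)) => φ (Pi.single j 1) i) h
    simpa [hfdef, Matrix.mulVecLin_apply] using this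
  have hvker : v ∈ LinearMap.ker f := by
    rw [LinearMap.mem_ker]
    simp only [hfdef, Matrix.mulVecLin_apply, hNdef]
    rw [Matrix.sub_mulVec, hCv, Matrix.smul_mulVec, Matrix.one_mulVec]
    simp
  -- the kernel of f is exactly the span of v
  have hspan_le : Submodule.span ℂ {v} ≤ LinearMap.ker f :=
    Submodule.span_le.mpr (by simpa using hvker)
  have hdim : Module.finrank ℂ (Fin 2 → ℂ) = 2 := by simp
  have hrange_pos : 0 < Module.finrank ℂ (LinearMap.range f) := by
    rw [Nat.pos_iff_ne_zero]
    intro h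
    rw [Submodule.finrank_eq_zero] at h
    rw [LinearMap.range_eq_bot] at h
    exact hfne h
  have hker_le : Module.finrank ℂ (LinearMap.ker f) ≤ 1 := by
    have := LinearMap.finrank_range_add_finrank_ker f
    omega
  have hspan_rank : Module.finrank ℂ (Submodule.span ℂ {v}) = 1 :=
    finrank_span_singleton hv0
  have hker_eq : LinearMap.ker f = Submodule.span ℂ {v} :=
    (Submodule.eq_of_le_of_finrank_le hspan_le (by omega)).symm
  -- every matrix commuting with C acts on v by a nonzero scalar
  have key : ∀ M : Matrix (Fin 2) (Fin 2) ℂ, IsUnit M → C * M = M * C →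
      ∃ a : ℂ, a ≠ 0 ∧ M.mulVec v = a • v := by
    intro M hM hcomm
    have hMv : M.mulVec v ∈ LinearMap.ker f := by
      rw [LinearMap.mem_ker]
      simp only [hfdef, Matrix.mulVecLin_apply, hNdef]
      rw [Matrix.sub_mulVec, Matrix.smul_mulVec, Matrix.one_mulVec,
        Matrix.mulVec_mulVec, hcomm, ← Matrix.mulVec_mulVec, hCv,
        Matrix.mulVec_smul]
      simp
    rw [hker_eq, Submodule.mem_span_singleton] at hMv
    obtain ⟨a, ha⟩ := hMv
    refine ⟨a, ?_, ha.symm⟩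
    intro ha0
    subst ha0
    rw [zero_smul] at ha
    have hdet : IsUnit M.det := (Matrix.isUnit_iff_isUnit_det M).mp hM
    have : M⁻¹.mulVec (M.mulVec v) = v := by
      rw [Matrix.mulVec_mulVec, Matrix.nonsing_inv_mul M hdet, Matrix.one_mulVec]
    rw [← ha] at this
    simp [Matrix.mulVec_zero] at this
    exact hv0 this.symm
  -- inverse matrices act by inverse scalar
  have inv_act : ∀ (M : Matrix (Fin 2) (Fin 2) ℂ) (a : ℂ), IsUnit M → a ≠ 0 →
      M.mulVec v = a • v → M⁻¹.mulVec v = a⁻¹ • v := by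
    intro M a hM ha hMv
    have hdet : IsUnit M.det := (Matrix.isUnit_iff_isUnit_det M).mp hM
    have h1 : M⁻¹.mulVec (M.mulVec v) = v := by
      rw [Matrix.mulVec_mulVec, Matrix.nonsing_inv_mul M hdet, Matrix.one_mulVec]
    rw [hMv, Matrix.mulVec_smul] at h1
    calc M⁻¹.mulVec v = a⁻¹ • (a • M⁻¹.mulVec v) := by
          rw [smul_smul, inv_mul_cancel₀ ha, one_smul]
      _ = a⁻¹ • v := by rw [h1]
  -- each commutator fixes v
  have comm_fix : ∀ M ∈ (List.range g).map
      (fun i => (A (i + 1))⁻¹ * (B (i + 1))⁻¹ * A (i + 1) * B (i + 1)),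
      M.mulVec v = v := by
    intro M hM
    rw [List.mem_map] at hM
    obtain ⟨i, hi, rfl⟩ := hM
    rw [List.mem_range] at hi
    have h1 : 1 ≤ i + 1 := Nat.le_add_left 1 i
    have h2 : i + 1 ≤ g := hi
    obtain ⟨a, ha0, haA⟩ := key (A (i+1)) (hA _ h1 h2) (hCA _ h1 h2)
    obtain ⟨b, hb0, hbB⟩ := key (B (i+1)) (hB _ h1 h2) (hCB _ h1 h2)
    have hAinv := inv_act (A (i+1)) a (hA _ h1 h2) ha0 haA
    have hBinv := inv_act (B (i+1)) b (hB _ h1 h2) hb0 hbB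
    simp only [← Matrix.mulVec_mulVec, hbB, Matrix.mulVec_smul, haA, hBinv, hAinv,
      smul_smul]
    have hs : b * (a * (b⁻¹ * a⁻¹)) = 1 := by field_simp
    rw [hs, one_smul]
  have hprod := list_prod_mulVec_fix v _ comm_fix
  rw [hrel] at hprod
  have : -v = v := by
    conv_rhs => rw [← hprod]
    simp [Matrix.neg_mulVec, Matrix.one_mulVec]
  have : (2 : ℂ) • v = 0 := by
    have := congrArg (fun w => w + v) this
    simpa [two_smul] using this.symm
  exact hv0 (by simpa using (smul_eq_zero.mp this).resolve_left (by norm_num))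
end
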